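/- Let K ≥ 0 with Rician density f_K(h) = ((K+1)/π) · exp(−(K+1)·|h − √(K/(K+1))|²) on ℂ, let Q(x) = ∫_x^∞ (1/√(2π)) · exp(−u²/2) du be the Gaussian tail function, and let Δb ∈ ℂ be nonzero. Then lim_{ρ → ∞} ρ · ∫_ℂ Q(√ρ · |Δb| · |h| / √2) · f_K(h) dh = (K+1)·e^{−K}/|Δb|². In particular, the pairwise error probability associated with the non-removable singular fade states decays exactly as SNR^{−1}, with constant proportional to e^{−K}. -/

import Mathlib

open MeasureTheory Set Filter
open Topology

/-- The Rician density with Rician factor `K` on `ℂ`: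
`f_K(h) = ((K+1)/π) exp(−(K+1)|h − √(K/(K+1))|²)`. -/
noncomputable def ricianDensity (K : ℝ) (h : ℂ) : ℝ :=
  ((K + 1) / Real.pi) *
    Real.exp (-(K + 1) * (‖h - (Real.sqrt (K / (K + 1)) : ℂ)‖) ^ 2)

/-- The Gaussian tail function `Q(x) = ∫_x^∞ (1/√(2π)) exp(−u²/2) du`. -/
noncomputable def gaussianQ (x : ℝ) : ℝ :=
  ∫ u in Set.Ioi x, (1 / Real.sqrt (2 * Real.pi)) * Real.exp (-u ^ 2 / 2)

noncomputable def stdGauss (u : ℝ) : ℝ :=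
  (1 / Real.sqrt (2 * Real.pi)) * Real.exp (-u ^ 2 / 2)

lemma stdGauss_eq (u : ℝ) : stdGauss u
    = (1 / Real.sqrt (2 * Real.pi)) * Real.exp (-(1/2 : ℝ) * u ^ 2) := by
  unfold stdGauss; ring_nf

lemma integrable_stdGauss : Integrable stdGauss := by
  have : Integrable (fun u : ℝ => (1 / Real.sqrt (2 * Real.pi)) *
      Real.exp (-(1/2 : ℝ) * u ^ 2)) :=
    (integrable_exp_neg_mul_sq (by norm_num : (0:ℝ) < 1/2)).const_mul _
  exact this.congr (by filter_upwards with u using (stdGauss_eq u).symm)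

lemma continuous_stdGauss : Continuous stdGauss := by
  unfold stdGauss; fun_prop

lemma stdGauss_nonneg (u : ℝ) : 0 ≤ stdGauss u := by
  unfold stdGauss; positivity

lemma gaussianQ_eq (x : ℝ) : gaussianQ x = ∫ u in Set.Ioi x, stdGauss u := rfl

lemma gaussianQ_nonneg (x : ℝ) : 0 ≤ gaussianQ x := by
  rw [gaussianQ_eq]
  exact integral_nonneg fun u => stdGauss_nonneg u

lemma gaussianQ_primitive (x : ℝ) :
    gaussianQ x = gaussianQ 0 - ∫ u in (0:ℝ)..x, stdGauss u := by
  rcases le_or_gt 0 x with hx | hx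
  · rw [gaussianQ_eq, gaussianQ_eq, intervalIntegral.integral_of_le hx]
    have h := setIntegral_union (Set.Ioc_disjoint_Ioi le_rfl) measurableSet_Ioi
      (integrable_stdGauss.integrableOn (s := Ioc 0 x))
      (integrable_stdGauss.integrableOn (s := Ioi x))
    rw [Set.Ioc_union_Ioi_eq_Ioi hx] at h
    rw [h]; ring
  · rw [gaussianQ_eq, gaussianQ_eq, intervalIntegral.integral_of_ge hx.le]
    have h := setIntegral_union (Set.Ioc_disjoint_Ioi le_rfl) measurableSet_Ioi
      (integrable_stdGauss.integrableOn (s := Ioc x 0))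
      (integrable_stdGauss.integrableOn (s := Ioi 0))
    rw [Set.Ioc_union_Ioi_eq_Ioi hx.le] at h
    rw [h]; ring

lemma hasDerivAt_gaussianQ (x : ℝ) : HasDerivAt gaussianQ (-stdGauss x) x := by
  have h1 : HasDerivAt (fun y => ∫ u in (0:ℝ)..y, stdGauss u) (stdGauss x) x := by
    exact intervalIntegral.integral_hasDerivAt_right
      integrable_stdGauss.intervalIntegrable
      (continuous_stdGauss.stronglyMeasurableAtFilter _ _)
      continuous_stdGauss.continuousAt
  have h2 : HasDerivAt (fun y => gaussianQ 0 - ∫ u in (0:ℝ)..y, stdGauss u)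
      (-stdGauss x) x := by
    exact ((hasDerivAt_const x (gaussianQ 0)).sub h1).congr_deriv (by simp)
  exact h2.congr_of_eventuallyEq
    (Filter.Eventually.of_forall fun y => gaussianQ_primitive y)

lemma continuous_gaussianQ : Continuous gaussianQ :=
  continuous_iff_continuousAt.2 fun x => (hasDerivAt_gaussianQ x).continuousAt

lemma gaussianQ_zero : gaussianQ 0 = 1 / 2 := by
  rw [gaussianQ_eq]
  have : ∀ u : ℝ, stdGauss u = (1 / Real.sqrt (2 * Real.pi)) *
      Real.exp (-(1/2 : ℝ) * u ^ 2) := stdGauss_eq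
  rw [MeasureTheory.integral_congr_ae (Filter.Eventually.of_forall fun u => this u)]
  rw [integral_const_mul, integral_gaussian_Ioi]
  have h2 : Real.pi / (1/2 : ℝ) = 2 * Real.pi := by ring
  rw [h2]
  have hpos : (0:ℝ) < Real.sqrt (2 * Real.pi) :=
    Real.sqrt_pos.2 (by positivity)
  field_simp

lemma gaussianQ_le (x : ℝ) (hx : 0 ≤ x) :
    gaussianQ x ≤ Real.sqrt 2 * Real.exp (-(1/4 : ℝ) * x ^ 2) := by
  have hsq : (0:ℝ) < Real.sqrt (2 * Real.pi) := Real.sqrt_pos.2 (by positivity)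
  have key : gaussianQ x ≤ Real.exp (-(1/4:ℝ) * x ^ 2) *
      ∫ u in Set.Ioi x, (1 / Real.sqrt (2 * Real.pi)) * Real.exp (-(1/4:ℝ) * u ^ 2) := by
    rw [gaussianQ_eq, ← integral_const_mul]
    apply setIntegral_mono_on
    · exact integrable_stdGauss.integrableOn
    · exact (((integrable_exp_neg_mul_sq (by norm_num : (0:ℝ) < 1/4)).const_mul
        _).const_mul _).integrableOn
    · exact measurableSet_Ioi
    · intro u hu
      have hux : x ≤ u := le_of_lt hu
      have hexp : Real.exp (-u ^ 2 / 2) ≤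
          Real.exp (-(1/4:ℝ) * x ^ 2) * Real.exp (-(1/4:ℝ) * u ^ 2) := by
        rw [← Real.exp_add]
        apply Real.exp_le_exp.2
        nlinarith [sq_nonneg (u - x), sq_nonneg (u + x), mul_self_nonneg x]
      unfold stdGauss
      calc (1 / Real.sqrt (2 * Real.pi)) * Real.exp (-u ^ 2 / 2)
          ≤ (1 / Real.sqrt (2 * Real.pi)) *
            (Real.exp (-(1/4:ℝ) * x ^ 2) * Real.exp (-(1/4:ℝ) * u ^ 2)) := by
            apply mul_le_mul_of_nonneg_left hexp (by positivity)
        _ = Real.exp (-(1/4:ℝ) * x ^ 2) *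
            ((1 / Real.sqrt (2 * Real.pi)) * Real.exp (-(1/4:ℝ) * u ^ 2)) := by ring
  have key2 : (∫ u in Set.Ioi x, (1 / Real.sqrt (2 * Real.pi)) *
      Real.exp (-(1/4:ℝ) * u ^ 2)) ≤ Real.sqrt 2 := by
    have h1 : (∫ u in Set.Ioi x, (1 / Real.sqrt (2 * Real.pi)) *
        Real.exp (-(1/4:ℝ) * u ^ 2)) ≤
        ∫ u : ℝ, (1 / Real.sqrt (2 * Real.pi)) * Real.exp (-(1/4:ℝ) * u ^ 2) := by
      apply setIntegral_le_integral
      · exact (integrable_exp_neg_mul_sq (by norm_num : (0:ℝ) < 1/4)).const_mul _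
      · filter_upwards with u; positivity
    have h2 : (∫ u : ℝ, (1 / Real.sqrt (2 * Real.pi)) *
        Real.exp (-(1/4:ℝ) * u ^ 2)) = Real.sqrt 2 := by
      rw [integral_const_mul, integral_gaussian]
      rw [show Real.pi / (1/4:ℝ) = 4 * Real.pi by ring]
      rw [show (4:ℝ) * Real.pi = 2^2 * (2 * Real.pi) / 2 by ring]
      rw [show (2:ℝ)^2 * (2 * Real.pi) / 2 = 2 * (2 * Real.pi) by ring]
      rw [Real.sqrt_mul (by norm_num : (0:ℝ) ≤ 2)]
      field_simp
      rw [Real.sqrt_mul (by norm_num), Real.sqrt_sq (by norm_num), Real.sq_sqrt (by norm_num)]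
    linarith [h1, h2.le]
  calc gaussianQ x ≤ _ := key
    _ ≤ Real.exp (-(1/4:ℝ) * x ^ 2) * Real.sqrt 2 := by
        apply mul_le_mul_of_nonneg_left key2 (Real.exp_pos _).le
    _ = Real.sqrt 2 * Real.exp (-(1/4:ℝ) * x ^ 2) := by ring

lemma tendsto_sq_mul_exp (a : ℝ) (ha : 0 < a) :
    Tendsto (fun x : ℝ => x ^ 2 * Real.exp (-a * x ^ 2)) atTop (𝓝 0) := by
  have h1 : Tendsto (fun x : ℝ => a * x ^ 2) atTop atTop := by
    exact (tendsto_pow_atTop (two_ne_zero)).const_mul_atTop ha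
  have h2 := (Real.tendsto_pow_mul_exp_neg_atTop_nhds_zero 1).comp h1
  have h3 : Tendsto (fun x : ℝ => (1/a) * ((a * x ^ 2) ^ 1 * Real.exp (-(a * x ^ 2))))
      atTop (𝓝 ((1/a) * 0)) := h2.const_mul _
  rw [mul_zero] at h3
  refine h3.congr fun x => ?_
  field_simp

lemma tendsto_gaussianQ_zero : Tendsto gaussianQ atTop (𝓝 0) := by
  have hb : Tendsto (fun x : ℝ => Real.sqrt 2 * Real.exp (-(1/4:ℝ) * x ^ 2))
      atTop (𝓝 (Real.sqrt 2 * 0)) := by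
    apply Tendsto.const_mul
    have h1 : Tendsto (fun x : ℝ => (1/4:ℝ) * x ^ 2) atTop atTop :=
      (tendsto_pow_atTop (two_ne_zero)).const_mul_atTop (by norm_num)
    have := Real.tendsto_exp_neg_atTop_nhds_zero.comp h1
    refine this.congr fun x => ?_
    simp [Function.comp, neg_mul]
  rw [mul_zero] at hb
  refine tendsto_of_tendsto_of_tendsto_of_le_of_le' tendsto_const_nhds hb ?_ ?_
  · filter_upwards with x using gaussianQ_nonneg x
  · filter_upwards [eventually_ge_atTop (0:ℝ)] with x hx using gaussianQ_le x hx

lemma tendsto_sq_mul_gaussianQ_zero :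
    Tendsto (fun t : ℝ => t ^ 2 / 2 * gaussianQ t) atTop (𝓝 0) := by
  have hb : Tendsto (fun t : ℝ => (Real.sqrt 2 / 2) *
      (t ^ 2 * Real.exp (-(1/4:ℝ) * t ^ 2))) atTop (𝓝 ((Real.sqrt 2 / 2) * 0)) :=
    (tendsto_sq_mul_exp (1/4) (by norm_num)).const_mul _
  rw [mul_zero] at hb
  refine tendsto_of_tendsto_of_tendsto_of_le_of_le' tendsto_const_nhds hb ?_ ?_
  · filter_upwards with t
    have := gaussianQ_nonneg t
    positivity
  · filter_upwards [eventually_ge_atTop (0:ℝ)] with t ht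
    have := gaussianQ_le t ht
    have h2 : t ^ 2 / 2 * gaussianQ t ≤ t ^ 2 / 2 *
        (Real.sqrt 2 * Real.exp (-(1/4:ℝ) * t ^ 2)) := by
      apply mul_le_mul_of_nonneg_left this (by positivity)
    calc t ^ 2 / 2 * gaussianQ t ≤ _ := h2
      _ = Real.sqrt 2 / 2 * (t ^ 2 * Real.exp (-(1/4:ℝ) * t ^ 2)) := by ring

lemma stdGauss_le (t : ℝ) : stdGauss t ≤ Real.exp (-(1/4:ℝ) * t ^ 2) := by
  unfold stdGauss
  have h1 : Real.exp (-t ^ 2 / 2) ≤ Real.exp (-(1/4:ℝ) * t ^ 2) :=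
    Real.exp_le_exp.2 (by nlinarith [sq_nonneg t])
  have h2 : (1 : ℝ) / Real.sqrt (2 * Real.pi) ≤ 1 := by
    rw [div_le_one (Real.sqrt_pos.2 (by positivity))]
    rw [show (1:ℝ) = Real.sqrt 1 by simp]
    apply Real.sqrt_le_sqrt
    nlinarith [Real.pi_gt_three]
  calc (1 / Real.sqrt (2 * Real.pi)) * Real.exp (-t ^ 2 / 2)
      ≤ 1 * Real.exp (-t ^ 2 / 2) := by
        apply mul_le_mul_of_nonneg_right h2 (Real.exp_pos _).le
    _ = Real.exp (-t ^ 2 / 2) := one_mul _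
    _ ≤ _ := h1

lemma tendsto_mul_stdGauss_zero :
    Tendsto (fun t : ℝ => t / 2 * stdGauss t) atTop (𝓝 0) := by
  have hb : Tendsto (fun t : ℝ => (1/2 : ℝ) *
      (t ^ 2 * Real.exp (-(1/4:ℝ) * t ^ 2))) atTop (𝓝 ((1/2 : ℝ) * 0)) :=
    (tendsto_sq_mul_exp (1/4) (by norm_num)).const_mul _
  rw [mul_zero] at hb
  refine tendsto_of_tendsto_of_tendsto_of_le_of_le' tendsto_const_nhds hb ?_ ?_
  · filter_upwards [eventually_ge_atTop (0:ℝ)] with t ht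
    have := stdGauss_nonneg t
    positivity
  · filter_upwards [eventually_ge_atTop (1:ℝ)] with t ht
    have h0 : (0:ℝ) ≤ t := le_trans zero_le_one ht
    have h1 : stdGauss t ≤ Real.exp (-(1/4:ℝ) * t ^ 2) := stdGauss_le t
    have h2 : t ≤ t ^ 2 := by nlinarith
    calc t / 2 * stdGauss t ≤ t / 2 * Real.exp (-(1/4:ℝ) * t ^ 2) := by
          apply mul_le_mul_of_nonneg_left h1 (by positivity)
      _ ≤ t ^ 2 / 2 * Real.exp (-(1/4:ℝ) * t ^ 2) := by
          apply mul_le_mul_of_nonneg_right (by linarith) (Real.exp_pos _).le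
      _ = 1/2 * (t ^ 2 * Real.exp (-(1/4:ℝ) * t ^ 2)) := by ring

lemma hasDerivAt_stdGauss (t : ℝ) : HasDerivAt stdGauss (-t * stdGauss t) t := by
  have h1 : HasDerivAt (fun u : ℝ => -u ^ 2 / 2) (-t) t := by
    exact ((hasDerivAt_pow 2 t).neg.div_const 2).congr_deriv
      (by rw [show (2:ℕ) - 1 = 1 from rfl]; push_cast; ring)
  have h2 := (h1.exp).const_mul (1 / Real.sqrt (2 * Real.pi))
  exact h2.congr_deriv (by unfold stdGauss; ring)

noncomputable def gaussAux (t : ℝ) : ℝ :=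
  t ^ 2 / 2 * gaussianQ t - t / 2 * stdGauss t + (1 - gaussianQ t) / 2

lemma hasDerivAt_gaussAux (t : ℝ) : HasDerivAt gaussAux (t * gaussianQ t) t := by
  have hA : HasDerivAt (fun t : ℝ => t ^ 2 / 2 * gaussianQ t)
      (2 * t ^ 1 / 2 * gaussianQ t + t ^ 2 / 2 * (-stdGauss t)) t :=
    ((hasDerivAt_pow 2 t).div_const 2).mul (hasDerivAt_gaussianQ t)
  have hB : HasDerivAt (fun t : ℝ => t / 2 * stdGauss t)
      (1 / 2 * stdGauss t + t / 2 * (-t * stdGauss t)) t :=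
    ((hasDerivAt_id t).div_const 2).mul (hasDerivAt_stdGauss t)
  have hC : HasDerivAt (fun t : ℝ => (1 - gaussianQ t) / 2)
      ((0 - -stdGauss t) / 2) t :=
    ((hasDerivAt_const t 1).sub (hasDerivAt_gaussianQ t)).div_const 2
  have h := (hA.sub hB).add hC
  exact h.congr_deriv (by ring)

lemma tendsto_gaussAux : Tendsto gaussAux atTop (𝓝 (1 / 2)) := by
  have h : Tendsto (fun t => t ^ 2 / 2 * gaussianQ t - t / 2 * stdGauss t
      + (1 - gaussianQ t) / 2) atTop (𝓝 (0 - 0 + (1 - 0) / 2)) :=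
    (tendsto_sq_mul_gaussianQ_zero.sub tendsto_mul_stdGauss_zero).add
      ((tendsto_const_nhds.sub tendsto_gaussianQ_zero).div_const 2)
  norm_num at h
  exact h

lemma integral_mul_gaussianQ (c : ℝ) (hc : 0 < c) :
    ∫ y in Set.Ioi (0:ℝ), y * gaussianQ (c * y) = 1 / (4 * c ^ 2) := by
  set H : ℝ → ℝ := fun y => (1 / c ^ 2) * gaussAux (c * y) with hH
  have hderiv : ∀ y ∈ Set.Ici (0:ℝ), HasDerivAt H (y * gaussianQ (c * y)) y := by
    intro y _
    have h1 : HasDerivAt (fun y : ℝ => gaussAux (c * y))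
        ((c * y) * gaussianQ (c * y) * c) y :=
      by
        have hin : HasDerivAt (fun y : ℝ => c * y) c y := by
          simpa using (hasDerivAt_id y).const_mul c
        exact (hasDerivAt_gaussAux (c * y)).comp y hin
    have h2 := h1.const_mul (1 / c ^ 2)
    exact h2.congr_deriv (by
      rw [div_mul_eq_mul_div, one_mul, div_eq_iff (by positivity)]; ring)
  have hint : IntegrableOn (fun y : ℝ => y * gaussianQ (c * y)) (Set.Ioi 0) := by
    apply Integrable.mono'
      (g := fun y : ℝ => Real.sqrt 2 * (y * Real.exp (-(c ^ 2 / 4) * y ^ 2)))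
    · exact ((integrable_mul_exp_neg_mul_sq (by positivity)).const_mul _).integrableOn
    · exact (Continuous.aestronglyMeasurable (by
        exact continuous_id.mul (continuous_gaussianQ.comp (continuous_const.mul
          continuous_id)))).restrict
    · filter_upwards [ae_restrict_mem measurableSet_Ioi] with y hy
      have hy0 : (0:ℝ) < y := hy
      have h1 : gaussianQ (c * y) ≤ Real.sqrt 2 * Real.exp (-(1/4:ℝ) * (c * y) ^ 2) :=
        gaussianQ_le _ (by positivity)
      have h2 : (0:ℝ) ≤ gaussianQ (c * y) := gaussianQ_nonneg _
      rw [Real.norm_eq_abs, abs_of_nonneg (by positivity)]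
      calc y * gaussianQ (c * y)
          ≤ y * (Real.sqrt 2 * Real.exp (-(1/4:ℝ) * (c * y) ^ 2)) := by
            apply mul_le_mul_of_nonneg_left h1 hy0.le
        _ = Real.sqrt 2 * (y * Real.exp (-(c ^ 2 / 4) * y ^ 2)) := by
            rw [show (-(1/4:ℝ) * (c * y) ^ 2) = -(c ^ 2 / 4) * y ^ 2 by ring]
            ring
  have hlim : Tendsto H atTop (𝓝 ((1 / c ^ 2) * (1 / 2))) := by
    apply Tendsto.const_mul
    exact tendsto_gaussAux.comp (Tendsto.const_mul_atTop hc tendsto_id)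
  have := integral_Ioi_of_hasDerivAt_of_tendsto' hderiv hint hlim
  rw [this]
  have hH0 : H 0 = (1 / c ^ 2) * (1 / 4) := by
    simp only [hH, mul_zero]
    unfold gaussAux
    rw [gaussianQ_zero]
    norm_num
  rw [hH0]
  field_simp
  ring

lemma integrable_exp_norm_sq (a : ℝ) (ha : 0 < a) :
    Integrable (fun z : ℂ => Real.exp (-a * ‖z‖ ^ 2)) := by
  have hprod : Integrable (fun p : ℝ × ℝ =>
      Real.exp (-a * p.1 ^ 2) * Real.exp (-a * p.2 ^ 2)) :=
    (integrable_exp_neg_mul_sq ha).mul_prod (integrable_exp_neg_mul_sq ha)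
  have h := (Complex.volume_preserving_equiv_real_prod.integrable_comp_emb
    Complex.measurableEquivRealProd.measurableEmbedding).2 hprod
  refine h.congr (Filter.Eventually.of_forall fun z => ?_)
  simp only [Function.comp, Complex.measurableEquivRealProd_apply]
  rw [← Real.exp_add, Complex.sq_norm, Complex.normSq_apply]
  ring_nf

lemma integrable_gaussianQ_norm (c : ℝ) (hc : 0 < c) :
    Integrable (fun z : ℂ => gaussianQ (c * ‖z‖)) := by
  apply Integrable.mono'
    (g := fun z : ℂ => Real.sqrt 2 * Real.exp (-(c ^ 2 / 4) * ‖z‖ ^ 2))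
  · exact (integrable_exp_norm_sq _ (by positivity)).const_mul _
  · exact (continuous_gaussianQ.comp (continuous_const.mul continuous_norm)
      ).aestronglyMeasurable
  · filter_upwards with z
    rw [Real.norm_eq_abs, abs_of_nonneg (gaussianQ_nonneg _)]
    have h := gaussianQ_le (c * ‖z‖) (by positivity)
    calc gaussianQ (c * ‖z‖) ≤ Real.sqrt 2 * Real.exp (-(1/4:ℝ) * (c * ‖z‖) ^ 2) := h
      _ = Real.sqrt 2 * Real.exp (-(c ^ 2 / 4) * ‖z‖ ^ 2) := by
        rw [show (-(1/4:ℝ) * (c * ‖z‖) ^ 2) = -(c ^ 2 / 4) * ‖z‖ ^ 2 by ring]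

lemma integral_gaussianQ_norm (c : ℝ) (hc : 0 < c) :
    ∫ z : ℂ, gaussianQ (c * ‖z‖) = Real.pi / (2 * c ^ 2) := by
  have h := MeasureTheory.integral_fun_norm_addHaar (volume : Measure ℂ)
    (fun y => gaussianQ (c * y))
  rw [h, Complex.finrank_real_complex]
  have hball : ((volume : Measure ℂ) (Metric.ball 0 1)).toReal = Real.pi := by
    rw [Complex.volume_ball]
    simp [ENNReal.toReal_mul]
  rw [measureReal_def, hball]
  have : ∫ y in Set.Ioi (0:ℝ), y ^ (2 - 1) • gaussianQ (c * y)
      = ∫ y in Set.Ioi (0:ℝ), y * gaussianQ (c * y) := by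
    apply setIntegral_congr_fun measurableSet_Ioi
    intro y _
    simp [smul_eq_mul]
  rw [this, integral_mul_gaussianQ c hc]
  rw [nsmul_eq_mul, smul_eq_mul]
  field_simp
  ring

lemma continuous_ricianDensity (K : ℝ) : Continuous (ricianDensity K) := by
  unfold ricianDensity
  exact continuous_const.mul (Real.continuous_exp.comp (continuous_const.mul
    ((continuous_norm.comp (continuous_id.sub continuous_const)).pow 2)))

lemma ricianDensity_nonneg (K : ℝ) (hK : 0 ≤ K) (h : ℂ) : 0 ≤ ricianDensity K h := by
  unfold ricianDensity
  have : (0:ℝ) ≤ (K + 1) / Real.pi := by positivity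
  positivity

lemma ricianDensity_le (K : ℝ) (hK : 0 ≤ K) (h : ℂ) :
    ricianDensity K h ≤ (K + 1) / Real.pi := by
  unfold ricianDensity
  have h1 : Real.exp (-(K + 1) * (‖h - (Real.sqrt (K / (K + 1)) : ℂ)‖) ^ 2) ≤ 1 := by
    apply Real.exp_le_one_iff.2
    have : (0:ℝ) ≤ (‖h - (Real.sqrt (K / (K + 1)) : ℂ)‖) ^ 2 := sq_nonneg _
    nlinarith
  have h2 : (0:ℝ) ≤ (K + 1) / Real.pi := by positivity
  calc ((K + 1) / Real.pi) * _ ≤ ((K + 1) / Real.pi) * 1 :=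
        mul_le_mul_of_nonneg_left h1 h2
    _ = (K + 1) / Real.pi := mul_one _

lemma ricianDensity_zero (K : ℝ) (hK : 0 ≤ K) :
    ricianDensity K 0 = ((K + 1) / Real.pi) * Real.exp (-K) := by
  unfold ricianDensity
  congr 1
  have h1 : ‖0 - (Real.sqrt (K / (K + 1)) : ℂ)‖ = Real.sqrt (K / (K + 1)) := by
    rw [zero_sub, norm_neg, Complex.norm_real, Real.norm_eq_abs,
      abs_of_nonneg (Real.sqrt_nonneg _)]
  rw [h1, Real.sq_sqrt (by positivity)]
  congr 1
  have hK1 : K + 1 ≠ 0 := by positivity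
  field_simp

lemma tendsto_sqrt_atTop : Tendsto Real.sqrt atTop atTop := by
  apply tendsto_atTop.2
  intro b
  filter_upwards [eventually_ge_atTop (b ^ 2)] with x hx
  calc b ≤ |b| := le_abs_self b
    _ = Real.sqrt (b ^ 2) := (Real.sqrt_sq_eq_abs b).symm
    _ ≤ Real.sqrt x := Real.sqrt_le_sqrt hx


set_option maxHeartbeats 800000 in
/-- exact `SNR⁻¹` decay of the pairwise error probability associated
with the non-removable singular fade states, equations (9)–(10) of the paper:
`lim_{ρ→∞} ρ ∫_ℂ Q(√ρ |Δb| |h| / √2) f_K(h) dh = (K+1) e^{−K}/|Δb|²`. -/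
theorem nonremovable_pairwise_error_snr_inv_limit
    (K : ℝ) (hK : 0 ≤ K) (Δb : ℂ) (hΔb : Δb ≠ 0) :
    Tendsto (fun ρ : ℝ =>
        ρ * ∫ h : ℂ,
          gaussianQ (Real.sqrt ρ * ‖Δb‖ * ‖h‖ / Real.sqrt 2) *
            ricianDensity K h)
      atTop
      (nhds ((K + 1) * Real.exp (-K) / (‖Δb‖) ^ 2)) := by
  have habs : 0 < ‖Δb‖ := norm_pos_iff.2 hΔb
  have hs2 : (0:ℝ) < Real.sqrt 2 := Real.sqrt_pos.2 (by norm_num)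
  set c : ℝ := ‖Δb‖ / Real.sqrt 2 with hc_def
  have hc : 0 < c := by positivity
  set G : ℝ → ℂ → ℝ :=
    fun ρ z => gaussianQ (c * ‖z‖) * ricianDensity K ((Real.sqrt ρ)⁻¹ • z) with hG
  -- Step 1: eventual equality via scaling substitution
  have heq : ∀ᶠ ρ in atTop,
      ρ * ∫ h : ℂ, gaussianQ (Real.sqrt ρ * ‖Δb‖ * ‖h‖ / Real.sqrt 2) *
        ricianDensity K h = ∫ z : ℂ, G ρ z := by
    filter_upwards [eventually_gt_atTop (0:ℝ)] with ρ hρ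
    have hsρ : 0 < Real.sqrt ρ := Real.sqrt_pos.2 hρ
    have hGapp : ∀ h : ℂ, G ρ (Real.sqrt ρ • h) =
        gaussianQ (Real.sqrt ρ * ‖Δb‖ * ‖h‖ / Real.sqrt 2) *
          ricianDensity K h := by
      intro h
      simp only [hG]
      rw [inv_smul_smul₀ hsρ.ne']
      congr 2
      rw [norm_smul, Real.norm_eq_abs, abs_of_nonneg hsρ.le]
      rw [hc_def]
      field_simp
    have hcomp := MeasureTheory.Measure.integral_comp_smul_of_nonneg (volume : Measure ℂ) (G ρ)
      (Real.sqrt ρ) (hR := hsρ.le)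
    rw [Complex.finrank_real_complex, Real.sq_sqrt hρ.le] at hcomp
    have : (∫ h : ℂ, gaussianQ (Real.sqrt ρ * ‖Δb‖ * ‖h‖ / Real.sqrt 2) *
        ricianDensity K h) = ∫ h : ℂ, G ρ (Real.sqrt ρ • h) := by
      apply integral_congr_ae
      filter_upwards with h
      exact (hGapp h).symm
    rw [this, hcomp, smul_eq_mul]
    field_simp
  -- Step 2: dominated convergence
  have hrd0 : ricianDensity K 0 = ((K + 1) / Real.pi) * Real.exp (-K) :=
    ricianDensity_zero K hK
  have hDCT : Tendsto (fun ρ : ℝ => ∫ z : ℂ, G ρ z) atTop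
      (𝓝 (∫ z : ℂ, gaussianQ (c * ‖z‖) * ricianDensity K 0)) := by
    apply tendsto_integral_filter_of_dominated_convergence
      (bound := fun z : ℂ => gaussianQ (c * ‖z‖) * ((K + 1) / Real.pi))
    · filter_upwards with ρ
      exact (show Continuous (G ρ) from
        (continuous_gaussianQ.comp (continuous_const.mul continuous_norm)).mul
        ((continuous_ricianDensity K).comp (continuous_const_smul (Real.sqrt ρ)⁻¹))).aestronglyMeasurable
    · filter_upwards with ρ
      filter_upwards with z
      simp only [hG]
      rw [Real.norm_eq_abs, abs_of_nonneg
        (mul_nonneg (gaussianQ_nonneg _) (ricianDensity_nonneg K hK _))]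
      exact mul_le_mul_of_nonneg_left (ricianDensity_le K hK _) (gaussianQ_nonneg _)
    · exact (integrable_gaussianQ_norm c hc).mul_const _
    · filter_upwards with z
      simp only [hG]
      apply Tendsto.const_mul
      have h1 : Tendsto (fun ρ : ℝ => (Real.sqrt ρ)⁻¹ • z) atTop (𝓝 ((0:ℝ) • z)) := by
        apply Tendsto.smul_const
        exact tendsto_inv_atTop_zero.comp tendsto_sqrt_atTop
      rw [zero_smul] at h1
      exact (((continuous_ricianDensity K).tendsto 0).comp h1)
  -- Step 3: compute the limit value
  have hval : (∫ z : ℂ, gaussianQ (c * ‖z‖) * ricianDensity K 0)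
      = (K + 1) * Real.exp (-K) / (‖Δb‖) ^ 2 := by
    rw [integral_mul_const, integral_gaussianQ_norm c hc, hrd0]
    have hc2 : c ^ 2 = (‖Δb‖) ^ 2 / 2 := by
      rw [hc_def, div_pow, Real.sq_sqrt (by norm_num : (0:ℝ) ≤ 2)]
    rw [hc2]
    have hπ : Real.pi ≠ 0 := Real.pi_ne_zero
    field_simp
  rw [hval] at hDCT
  exact hDCT.congr' (heq.mono fun ρ h => h.symm)
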